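/- Let θ : [0,∞) → ℝ be C¹, let f : ℝ → ℝ be continuous with f(u) > 0 for u > 0, let d ≥ 2, and suppose ρ ↦ ρ^{d−1} e^{−ρ²/4} θ'(ρ) is differentiable on (0,∞) with derivative (d−1)ρ^{d−3} e^{−ρ²/4} f(θ(ρ)). If θ(ρ₀) > 0 and θ'(ρ₀) > 0 at some ρ₀ > 0, and θ(ρ) > 0 for all ρ ≥ ρ₀, then there is a constant C > 0 such that θ'(ρ) ≥ C ρ^{1−d} e^{ρ²/4} for all ρ ≥ ρ₀; consequently θ(ρ) → ∞ as ρ → ∞. -/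

import Mathlib

/-- Growth of θ from the monotonicity of the weighted derivative ρ^{d−1}e^{−ρ²/4}θ'. -/
theorem weighted_derivative_growth
    (d : ℕ) (hd : 2 ≤ d)
    (θ : ℝ → ℝ) (hθ : ContDiff ℝ 1 θ)
    (f : ℝ → ℝ) (hf_cont : Continuous f) (hf_pos : ∀ u > (0 : ℝ), 0 < f u)
    (hODE : ∀ ρ ∈ Set.Ioi (0 : ℝ),
      HasDerivAt (fun ρ : ℝ => ρ ^ ((d : ℝ) - 1) * Real.exp (-ρ ^ 2 / 4) * deriv θ ρ)
        (((d : ℝ) - 1) * ρ ^ ((d : ℝ) - 3) * Real.exp (-ρ ^ 2 / 4) * f (θ ρ)) ρ)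
    (ρ₀ : ℝ) (hρ₀ : 0 < ρ₀) (hθρ₀ : 0 < θ ρ₀) (hθ'ρ₀ : 0 < deriv θ ρ₀)
    (hθpos : ∀ ρ ≥ ρ₀, 0 < θ ρ) :
    (∃ C > (0 : ℝ), ∀ ρ ≥ ρ₀,
        C * ρ ^ ((1 : ℝ) - (d : ℝ)) * Real.exp (ρ ^ 2 / 4) ≤ deriv θ ρ) ∧
      Filter.Tendsto θ Filter.atTop Filter.atTop := by
  have hd2 : (2 : ℝ) ≤ (d : ℝ) := by exact_mod_cast hd
  set g : ℝ → ℝ := fun ρ : ℝ => ρ ^ ((d : ℝ) - 1) * Real.exp (-ρ ^ 2 / 4) * deriv θ ρ with hg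
  have hθ' : Continuous (deriv θ) := hθ.continuous_deriv le_rfl
  -- g is monotone on [ρ₀, ∞)
  have hgmono : MonotoneOn g (Set.Ici ρ₀) := by
    apply monotoneOn_of_deriv_nonneg (convex_Ici ρ₀)
    · apply ContinuousOn.mul (ContinuousOn.mul ?_ ?_) hθ'.continuousOn
      · exact continuousOn_id.rpow_const fun x hx =>
          Or.inl (ne_of_gt (lt_of_lt_of_le hρ₀ hx))
      · exact (Real.continuous_exp.comp (by continuity)).continuousOn
    · intro x hx
      rw [interior_Ici] at hx
      exact ((hODE x (lt_trans hρ₀ hx)).differentiableAt).differentiableWithinAt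
    · intro x hx
      rw [interior_Ici] at hx
      have hx0 : (0 : ℝ) < x := lt_trans hρ₀ hx
      rw [(hODE x hx0).deriv]
      have h1 : 0 < (d : ℝ) - 1 := by linarith
      have h2 : 0 < x ^ ((d : ℝ) - 3) := Real.rpow_pos_of_pos hx0 _
      have h3 : 0 < f (θ x) := hf_pos _ (hθpos x hx.le)
      positivity
  have hC : 0 < g ρ₀ := by
    have := Real.rpow_pos_of_pos hρ₀ ((d : ℝ) - 1)
    have := Real.exp_pos (-ρ₀ ^ 2 / 4)
    positivity
  set C : ℝ := g ρ₀ with hCdef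
  have hbound : ∀ ρ ≥ ρ₀, C * ρ ^ ((1 : ℝ) - (d : ℝ)) * Real.exp (ρ ^ 2 / 4) ≤ deriv θ ρ := by
    intro ρ hρ
    have hρpos : 0 < ρ := lt_of_lt_of_le hρ₀ hρ
    have hge : C ≤ g ρ := hgmono (Set.self_mem_Ici) hρ hρ
    have hA : (0 : ℝ) < ρ ^ ((d : ℝ) - 1) * Real.exp (-ρ ^ 2 / 4) := by
      have := Real.rpow_pos_of_pos hρpos ((d : ℝ) - 1); positivity
    have hkey : ρ ^ ((1 : ℝ) - (d : ℝ)) * Real.exp (ρ ^ 2 / 4)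
        = (ρ ^ ((d : ℝ) - 1) * Real.exp (-ρ ^ 2 / 4))⁻¹ := by
      rw [mul_inv, ← Real.rpow_neg hρpos.le, ← Real.exp_neg]
      ring_nf
    rw [mul_assoc, hkey, ← div_eq_mul_inv, div_le_iff₀ hA]
    calc C ≤ g ρ := hge
    _ = deriv θ ρ * (ρ ^ ((d : ℝ) - 1) * Real.exp (-ρ ^ 2 / 4)) := by rw [hg]; ring
  refine ⟨⟨C, hC, hbound⟩, ?_⟩
  -- the lower bound tends to infinity
  have hlb : Filter.Tendsto (fun ρ : ℝ => C * ρ ^ ((1 : ℝ) - (d : ℝ)) * Real.exp (ρ ^ 2 / 4))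
      Filter.atTop Filter.atTop := by
    have h1 : Filter.Tendsto (fun ρ : ℝ => Real.exp ρ / ρ ^ ((d : ℝ) - 1))
        Filter.atTop Filter.atTop := tendsto_exp_div_rpow_atTop _
    have h2 := h1.const_mul_atTop hC
    apply Filter.tendsto_atTop_mono' _ _ h2
    filter_upwards [Filter.eventually_ge_atTop 4] with ρ hρ
    have hρpos : (0 : ℝ) < ρ := by linarith
    have hle : ρ ≤ ρ ^ 2 / 4 := by nlinarith
    have hkey : ρ ^ ((1 : ℝ) - (d : ℝ)) = (ρ ^ ((d : ℝ) - 1))⁻¹ := by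
      rw [← Real.rpow_neg hρpos.le]; ring_nf
    rw [div_eq_mul_inv, ← hkey, ← mul_assoc]
    rw [mul_comm C (Real.exp ρ), mul_assoc, mul_comm (Real.exp ρ)]
    rw [mul_assoc]
    have hq : 0 < C * ρ ^ ((1 : ℝ) - (d : ℝ)) := by
      have := Real.rpow_pos_of_pos hρpos ((1 : ℝ) - (d : ℝ)); positivity
    rw [← mul_assoc]
    exact mul_le_mul_of_nonneg_left (Real.exp_le_exp.mpr hle) hq.le
  have hev : ∀ᶠ ρ in Filter.atTop, (1 : ℝ) ≤ deriv θ ρ := by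
    filter_upwards [hlb.eventually_ge_atTop 1, Filter.eventually_ge_atTop ρ₀] with ρ h1 h2
    exact h1.trans (hbound ρ h2)
  rw [Filter.eventually_atTop] at hev
  obtain ⟨R, hR⟩ := hev
  have hdθ : Differentiable ℝ θ := hθ.differentiable one_ne_zero
  have hmono2 : MonotoneOn (fun ρ => θ ρ - ρ) (Set.Ici R) := by
    apply monotoneOn_of_deriv_nonneg (convex_Ici R)
      ((hθ.continuous.sub continuous_id).continuousOn)
    · intro x _
      exact ((hdθ x).sub differentiable_id.differentiableAt).differentiableWithinAt
    · intro x hx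
      rw [interior_Ici] at hx
      rw [deriv_sub (hdθ x) differentiable_id.differentiableAt, deriv_id]
      have := hR x hx.le
      linarith
  apply Filter.tendsto_atTop_mono' _ _
    (Filter.tendsto_atTop_add_const_right Filter.atTop (θ R - R) Filter.tendsto_id)
  filter_upwards [Filter.eventually_ge_atTop R] with ρ hρ
  have := hmono2 Set.self_mem_Ici hρ hρ
  simp only [Filter.tendsto_id, id] at this ⊢
  linarith
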